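/- If sign(S) ⊆ cl(sign(S̃)) for subspaces S, S̃ ⊆ R^n, then dim S ≤ dim S̃. -/

import Mathlib

/-- The set of sign vectors of a set of real vectors (sign applied componentwise). -/
def signSet {n : ℕ} (S : Set (Fin n → ℝ)) : Set (Fin n → SignType) :=
  {σ | ∃ x ∈ S, ∀ i, σ i = SignType.sign (x i)}

/-- The lower closure of a set of sign vectors, with respect to the componentwise
partial order on `{-,0,+}ⁿ` in which `0` lies below both `-` and `+`. -/
def lowerClosureSV {n : ℕ} (T : Set (Fin n → SignType)) : Set (Fin n → SignType) :=
  {σ | ∃ τ ∈ T, ∀ i, σ i = 0 ∨ σ i = τ i}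

theorem finrank_le_of_signSet_subset_closure {n : ℕ}
    (S St : Submodule ℝ (Fin n → ℝ))
    (h : signSet (S : Set (Fin n → ℝ)) ⊆ lowerClosureSV (signSet (St : Set (Fin n → ℝ)))) :
    Module.finrank ℝ S ≤ Module.finrank ℝ St := by
  classical
  set e : EuclideanSpace ℝ (Fin n) ≃ₗ[ℝ] (Fin n → ℝ) := WithLp.linearEquiv 2 ℝ (Fin n → ℝ)
  set S' : Submodule ℝ (EuclideanSpace ℝ (Fin n)) := S.comap e.toLinearMap
  set St' : Submodule ℝ (EuclideanSpace ℝ (Fin n)) := St.comap e.toLinearMap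
  have hS' : Module.finrank ℝ S' = Module.finrank ℝ S := by
    simp only [S', St']
    have := LinearEquiv.finrank_map_eq e.symm S
    rw [← Submodule.comap_equiv_eq_map_symm] at this
    exact this
  have hSt' : Module.finrank ℝ St' = Module.finrank ℝ St := by
    simp only [S', St']
    have := LinearEquiv.finrank_map_eq e.symm St
    rw [← Submodule.comap_equiv_eq_map_symm] at this
    exact this
  -- key disjointness : S' ⊓ St'ᗮ = ⊥
  have hdisj : S' ⊓ St'ᗮ = ⊥ := by
    rw [Submodule.eq_bot_iff]
    rintro x ⟨hxS, hxO⟩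
    -- the sign vector of x lies in signSet S
    have hx : (fun i => SignType.sign (x i)) ∈ signSet (S : Set (Fin n → ℝ)) :=
      ⟨e x, hxS, fun i => rfl⟩
    obtain ⟨τ, ⟨y, hy, hτ⟩, hle⟩ := h hx
    have hyx : (inner ℝ (St'.subtype ⟨e.symm y, by simpa [St', e] using hy⟩) x : ℝ) = 0 := by
      exact (Submodule.mem_orthogonal St' x).mp hxO _ (by simpa [St', e] using hy)
    have hsum : ∑ i : Fin n, y i * x i = 0 := by
      rw [← hyx, PiLp.inner_apply]
      simp [RCLike.inner_apply, e, mul_comm]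
    have hterm : ∀ i : Fin n, 0 ≤ y i * x i := by
      intro i
      rcases hle i with h0 | hs
      · have : x i = 0 := sign_eq_zero_iff.mp h0
        simp [this]
      · rw [hτ i] at hs
        rcases lt_trichotomy (x i) 0 with hlt | heq | hgt
        · have : SignType.sign (y i) = -1 := by
            rw [← hs]; exact sign_eq_neg_one_iff.mpr hlt
          have hy' : y i < 0 := sign_eq_neg_one_iff.mp this
          exact le_of_lt (mul_pos_of_neg_of_neg hy' hlt)
        · simp [heq]
        · have : SignType.sign (y i) = 1 := by
            rw [← hs]; exact sign_eq_one_iff.mpr hgt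
          have hy' : 0 < y i := sign_eq_one_iff.mp this
          exact le_of_lt (mul_pos hy' hgt)
    have hzero : ∀ i : Fin n, y i * x i = 0 :=
      fun i => (Finset.sum_eq_zero_iff_of_nonneg (fun i _ => hterm i)).mp hsum i (Finset.mem_univ i)
    -- each coordinate of x is zero
    ext i
    change x i = 0
    by_contra hxi
    rcases hle i with h0 | hs
    · exact hxi (sign_eq_zero_iff.mp h0)
    · rw [hτ i] at hs
      rcases lt_trichotomy (x i) 0 with hlt | heq | hgt
      · have : SignType.sign (y i) = -1 := by
          rw [← hs]; exact sign_eq_neg_one_iff.mpr hlt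
        have hy' : y i < 0 := sign_eq_neg_one_iff.mp this
        exact (ne_of_gt (mul_pos_of_neg_of_neg hy' hlt)) (hzero i)
      · exact hxi heq
      · have : SignType.sign (y i) = 1 := by
          rw [← hs]; exact sign_eq_one_iff.mpr hgt
        have hy' : 0 < y i := sign_eq_one_iff.mp this
        exact (ne_of_gt (mul_pos hy' hgt)) (hzero i)
  have h1 := Submodule.finrank_sup_add_finrank_inf_eq S' St'ᗮ
  rw [hdisj] at h1
  have h2 := Submodule.finrank_add_finrank_orthogonal St'
  have h3 : Module.finrank ℝ ↥(S' ⊔ St'ᗮ) ≤ Module.finrank ℝ (EuclideanSpace ℝ (Fin n)) :=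
    Submodule.finrank_le _
  rw [finrank_euclideanSpace_fin] at h2 h3
  simp only [finrank_bot, add_zero] at h1
  omega
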